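/- Fix q ∈ (0,1) and c ∈ ℝ with 0 ≤ c ≤ min{q, 1−q}. Then (1/2)·((√q − √(q−c))² + (√(1−q−c) − √(1−q))²) ≤ c²/(2·q·(1−q)). Consequently, for the two lower-bound distributions P and Q of the paper's construction (which differ only in point masses: P has mass q at 0 and mass 1−q−c at H while Q has mass q−c at 0 and mass 1−q at H, with identical densities in between, and c = q(1−q)/(3√n)), the squared Hellinger distance satisfies H²(P,Q) ≤ c²/(2·q·(1−q)). -/

import Mathlib

open MeasureTheory Set
open scoped ENNReal

noncomputable section

/-- The Newsvendor loss `ℓ(a,Z) = q·max{Z−a,0} + (1−q)·max{a−Z,0}` with critical quantile `q`. -/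
def nvLoss (q a z : ℝ) : ℝ := q * max (z - a) 0 + (1 - q) * max (a - z) 0

/-- The expected Newsvendor loss `L(a)` under the demand distribution `μ`. -/
def expLoss (q : ℝ) (μ : Measure ℝ) (a : ℝ) : ℝ := ∫ z, nvLoss q a z ∂μ

/-- The CDF of the demand distribution `μ`. -/
def cdf' (μ : Measure ℝ) (z : ℝ) : ℝ := (μ (Iic z)).toReal

/-- The optimal decision `a* = inf {a ≥ 0 : F(a) ≥ q}`. -/
def optDec (q : ℝ) (μ : Measure ℝ) : ℝ := sInf {a : ℝ | 0 ≤ a ∧ q ≤ cdf' μ a}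

/-- The empirical CDF of the samples `ω : Fin n → ℝ`. -/
def empCdf (n : ℕ) (ω : Fin n → ℝ) (z : ℝ) : ℝ :=
  (∑ i : Fin n, if ω i ≤ z then (1 : ℝ) else 0) / n

/-- The SAA (sample average approximation) decision `â = inf {a ≥ 0 : F̂(a) ≥ q}`. -/
def saa (q : ℝ) (n : ℕ) (ω : Fin n → ℝ) : ℝ := sInf {a : ℝ | 0 ≤ a ∧ q ≤ empCdf n ω a}

/-- The joint law of `n` iid samples from `μ`. -/
def iid (μ : Measure ℝ) (n : ℕ) : Measure (Fin n → ℝ) := Measure.pi fun _ => μ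

/-- A distribution `μ` is `(β,γ,ζ)`-clustered if
`|a − a*| ≤ (1/γ)·|F(a) − q|^{1/(β+1)}` for all `a ∈ [a*−ζ, a*+ζ]`. -/
def Clustered (q β γ ζ : ℝ) (μ : Measure ℝ) : Prop :=
  ∀ a ∈ Icc (optDec q μ - ζ) (optDec q μ + ζ),
    |a - optDec q μ| ≤ (1 / γ) * |cdf' μ a - q| ^ ((1 : ℝ) / (β + 1))

/-- The squared Hellinger distance
`H²(P,Q) = (1/2)·∫ (√(dP/dμ) − √(dQ/dμ))² dμ`, computed with the common dominating
measure `μ = P + Q`. -/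
def sqHellinger (P Q : Measure ℝ) : ℝ :=
  (1/2) * ∫ x, (Real.sqrt ((P.rnDeriv (P + Q) x).toReal)
      - Real.sqrt ((Q.rnDeriv (P + Q) x).toReal))^2 ∂(P + Q)

/-- The lower-bound distribution `P`: mass `q` at `0`, uniform density `C/(H√n)` on
`(0,H)`, and mass `1 − q − C/√n` at `H`. -/
def lowerBoundP (q C H : ℝ) (n : ℕ) : Measure ℝ :=
  ENNReal.ofReal q • Measure.dirac 0
    + ENNReal.ofReal (1 - q - C / Real.sqrt n) • Measure.dirac H
    + (volume.restrict (Ioo 0 H)).withDensity fun _ => ENNReal.ofReal (C/(H*Real.sqrt n))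

/-- The lower-bound distribution `Q`: mass `q − C/√n` at `0`, uniform density `C/(H√n)` on
`(0,H)`, and mass `1 − q` at `H`. -/
def lowerBoundQ (q C H : ℝ) (n : ℕ) : Measure ℝ :=
  ENNReal.ofReal (q - C / Real.sqrt n) • Measure.dirac 0
    + ENNReal.ofReal (1 - q) • Measure.dirac H
    + (volume.restrict (Ioo 0 H)).withDensity fun _ => ENNReal.ofReal (C/(H*Real.sqrt n))

lemma withDensity_dirac' {f : ℝ → ℝ≥0∞} (hf : Measurable f) (a : ℝ) :
    (Measure.dirac a).withDensity f = f a • Measure.dirac a := by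
  classical
  ext s hs
  rw [withDensity_apply _ hs, Measure.smul_apply, Measure.dirac_apply' _ hs,
    setLIntegral_dirac' hf hs]
  by_cases h : a ∈ s <;> simp [h, indicator]

set_option maxHeartbeats 2000000 in
/-- For `q ∈ (0,1)` and `0 ≤ c ≤ min{q,1−q}`,
`(1/2)·((√q − √(q−c))² + (√(1−q−c) − √(1−q))²) ≤ c²/(2q(1−q))`; consequently, for the
paper's lower-bound distributions `P` and `Q` (which differ only in their point masses at
`0` and `H`, with `c = q(1−q)/(3√n)`), the squared Hellinger distance satisfies
`H²(P,Q) ≤ c²/(2q(1−q))`. -/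
theorem hellinger_distance_bound
    (q : ℝ) (hq : q ∈ Ioo (0:ℝ) 1) (n : ℕ) (hn : 1 ≤ n) (H : ℝ) (hH : 0 < H) :
    (∀ c : ℝ, 0 ≤ c → c ≤ min q (1 - q) →
      (1/2) * ((Real.sqrt q - Real.sqrt (q - c))^2
          + (Real.sqrt (1 - q - c) - Real.sqrt (1 - q))^2)
        ≤ c^2 / (2*q*(1-q))) ∧
    sqHellinger (lowerBoundP q (q*(1-q)/3) H n) (lowerBoundQ q (q*(1-q)/3) H n)
      ≤ (q*(1-q)/(3*Real.sqrt n))^2 / (2*q*(1-q)) := by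
  
  obtain ⟨hq0, hq1⟩ := hq
  have key : ∀ c : ℝ, 0 ≤ c → c ≤ min q (1 - q) →
      (1/2) * ((Real.sqrt q - Real.sqrt (q - c))^2
          + (Real.sqrt (1 - q - c) - Real.sqrt (1 - q))^2)
        ≤ c^2 / (2*q*(1-q)) := by
    intro c hc0 hcm
    have hcq : c ≤ q := le_trans hcm (min_le_left _ _)
    have hc1q : c ≤ 1 - q := le_trans hcm (min_le_right _ _)
    have ha : (Real.sqrt q)^2 = q := Real.sq_sqrt hq0.le
    have hb : (Real.sqrt (q - c))^2 = q - c := Real.sq_sqrt (by linarith)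
    have hu : (Real.sqrt (1-q))^2 = 1-q := Real.sq_sqrt (by linarith)
    have hv : (Real.sqrt (1-q-c))^2 = 1-q-c := Real.sq_sqrt (by linarith)
    have ha0 := Real.sqrt_nonneg q
    have hb0 := Real.sqrt_nonneg (q - c)
    have hu0 := Real.sqrt_nonneg (1-q)
    have hv0 := Real.sqrt_nonneg (1-q-c)
    have h1 : q * (Real.sqrt q - Real.sqrt (q-c))^2 ≤ c^2 := by
      nlinarith [sq_nonneg (Real.sqrt q - Real.sqrt (q-c)), mul_nonneg ha0 hb0]
    have h2 : (1-q) * (Real.sqrt (1-q-c) - Real.sqrt (1-q))^2 ≤ c^2 := by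
      nlinarith [sq_nonneg (Real.sqrt (1-q-c) - Real.sqrt (1-q)), mul_nonneg hu0 hv0]
    have hX : (Real.sqrt q - Real.sqrt (q-c))^2 ≤ c^2 / q := by
      rw [le_div_iff₀ hq0]; linarith
    have hY : (Real.sqrt (1-q-c) - Real.sqrt (1-q))^2 ≤ c^2 / (1-q) := by
      rw [le_div_iff₀ (by linarith)]; linarith
    have hqne : q ≠ 0 := hq0.ne'
    have h1qne : (1:ℝ) - q ≠ 0 := by linarith
    have heq : c^2 / (2*q*(1-q)) = (1/2) * (c^2/q + c^2/(1-q)) := by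
      field_simp; ring
    rw [heq]; linarith
  refine ⟨key, ?_⟩
  set s : ℝ := Real.sqrt n with hsdef
  have hs1 : (1:ℝ) ≤ s := by
    rw [hsdef, show (1:ℝ) = Real.sqrt 1 by simp]
    exact Real.sqrt_le_sqrt (by exact_mod_cast hn)
  have hs0 : (0:ℝ) < s := lt_of_lt_of_le one_pos hs1
  set C : ℝ := q*(1-q)/3 with hCdef
  set c : ℝ := C / s with hcdef
  have hq1q : 0 < q*(1-q) := by nlinarith
  have hC0 : 0 < C := by rw [hCdef]; linarith
  have hc0 : 0 < c := div_pos hC0 hs0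
  have hcC : c ≤ C := by
    rw [hcdef, div_le_iff₀ hs0]; nlinarith
  have hcq : c < q := by
    have : C < q := by rw [hCdef]; nlinarith
    linarith
  have hc1q : c < 1 - q := by
    have : C < 1 - q := by rw [hCdef]; nlinarith
    linarith
  have ht0 : 0 < 2*q - c := by linarith
  have ht'0 : 0 < 2 - 2*q - c := by linarith
  set P := lowerBoundP q C H n with hPdef
  set Q := lowerBoundQ q C H n with hQdef
  set ν := P + Q with hνdef
  set ρ := (volume.restrict (Ioo 0 H)).withDensity
      (fun _ => ENNReal.ofReal (C/(H*s))) with hρdef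
  classical
  set h : ℝ → ℝ≥0∞ := fun x =>
    if x = 0 then ENNReal.ofReal (q/(2*q-c))
    else if x = H then ENNReal.ofReal ((1-q-c)/(2-2*q-c)) else 2⁻¹ with hhdef
  set h' : ℝ → ℝ≥0∞ := fun x =>
    if x = 0 then ENNReal.ofReal ((q-c)/(2*q-c))
    else if x = H then ENNReal.ofReal ((1-q)/(2-2*q-c)) else 2⁻¹ with hh'def
  have hmeas : Measurable h :=
    Measurable.ite measurableSet_eq measurable_const
      (Measurable.ite measurableSet_eq measurable_const measurable_const)
  have hmeas' : Measurable h' :=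
    Measurable.ite measurableSet_eq measurable_const
      (Measurable.ite measurableSet_eq measurable_const measurable_const)
  -- explicit forms of P and Q
  have hP' : P = ENNReal.ofReal q • Measure.dirac 0
      + ENNReal.ofReal (1 - q - c) • Measure.dirac H + ρ := by
    rw [hPdef, lowerBoundP, hρdef]
  have hQ' : Q = ENNReal.ofReal (q - c) • Measure.dirac 0
      + ENNReal.ofReal (1 - q) • Measure.dirac H + ρ := by
    rw [hQdef, lowerBoundQ, hρdef]
  have hh0 : h 0 = ENNReal.ofReal (q/(2*q-c)) := if_pos rfl
  have hhH : h H = ENNReal.ofReal ((1-q-c)/(2-2*q-c)) := by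
    simp [hhdef, hH.ne']
  have hh'0 : h' 0 = ENNReal.ofReal ((q-c)/(2*q-c)) := if_pos rfl
  have hh'H : h' H = ENNReal.ofReal ((1-q)/(2-2*q-c)) := by
    simp [hh'def, hH.ne']
  -- withDensity of ρ by h or h' halves it
  have hρh : ∀ (g : ℝ → ℝ≥0∞), Measurable g → (∀ x ∈ Ioo (0:ℝ) H, g x = 2⁻¹) →
      ρ.withDensity g + ρ.withDensity g = ρ := by
    intro g hg hgval
    have h1 : ρ.withDensity g
        = (volume.restrict (Ioo 0 H)).withDensity
            (fun x => ENNReal.ofReal (C/(H*s)) * 2⁻¹) := by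
      rw [hρdef, ← withDensity_mul _ measurable_const hg]
      apply withDensity_congr_ae
      filter_upwards [ae_restrict_mem measurableSet_Ioo] with x hx
      simp [hgval x hx]
    rw [h1, ← withDensity_add_right _ measurable_const]
    rw [hρdef]
    congr 1
    funext x
    simp only [Pi.add_apply]
    rw [← mul_add, ENNReal.inv_two_add_inv_two, mul_one]
  have rearr : ∀ (a b r a' b' r' : Measure ℝ),
      (a + b + r) + (a' + b' + r') = (a + a') + (b + b') + (r + r') := by
    intro a b r a' b' r'; abel
  have htne : (2*q - c) ≠ 0 := ht0.ne'
  have ht'ne : (2 - 2*q - c) ≠ 0 := ht'0.ne'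
  have hz0 : (0:ℝ) ≤ q/(2*q-c) := div_nonneg hq0.le ht0.le
  have hzH : (0:ℝ) ≤ (1-q-c)/(2-2*q-c) := div_nonneg (by linarith) ht'0.le
  have hz'0 : (0:ℝ) ≤ (q-c)/(2*q-c) := div_nonneg (by linarith) ht0.le
  have hz'H : (0:ℝ) ≤ (1-q)/(2-2*q-c) := div_nonneg (by linarith) ht'0.le
  have hcoef0 : ENNReal.ofReal q * h 0 + ENNReal.ofReal (q-c) * h 0
      = ENNReal.ofReal q := by
    rw [hh0, ← ENNReal.ofReal_mul hq0.le, ← ENNReal.ofReal_mul (by linarith : (0:ℝ) ≤ q - c),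
      ← ENNReal.ofReal_add (mul_nonneg hq0.le hz0) (mul_nonneg (by linarith) hz0)]
    congr 1
    linear_combination (q) * mul_inv_cancel₀ htne
  have hcoefH : ENNReal.ofReal (1-q-c) * h H + ENNReal.ofReal (1-q) * h H
      = ENNReal.ofReal (1-q-c) := by
    rw [hhH, ← ENNReal.ofReal_mul (by linarith : (0:ℝ) ≤ 1-q-c),
      ← ENNReal.ofReal_mul (by linarith : (0:ℝ) ≤ 1-q),
      ← ENNReal.ofReal_add (mul_nonneg (by linarith) hzH) (mul_nonneg (by linarith) hzH)]
    congr 1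
    linear_combination (1-q-c) * mul_inv_cancel₀ ht'ne
  have hcoef'0 : ENNReal.ofReal q * h' 0 + ENNReal.ofReal (q-c) * h' 0
      = ENNReal.ofReal (q-c) := by
    rw [hh'0, ← ENNReal.ofReal_mul hq0.le, ← ENNReal.ofReal_mul (by linarith : (0:ℝ) ≤ q - c),
      ← ENNReal.ofReal_add (mul_nonneg hq0.le hz'0) (mul_nonneg (by linarith) hz'0)]
    congr 1
    linear_combination (q-c) * mul_inv_cancel₀ htne
  have hcoef'H : ENNReal.ofReal (1-q-c) * h' H + ENNReal.ofReal (1-q) * h' H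
      = ENNReal.ofReal (1-q) := by
    rw [hh'H, ← ENNReal.ofReal_mul (by linarith : (0:ℝ) ≤ 1-q-c),
      ← ENNReal.ofReal_mul (by linarith : (0:ℝ) ≤ 1-q),
      ← ENNReal.ofReal_add (mul_nonneg (by linarith) hz'H) (mul_nonneg (by linarith) hz'H)]
    congr 1
    linear_combination (1-q) * mul_inv_cancel₀ ht'ne
  -- ν.withDensity h = P
  have hPh : ν.withDensity h = P := by
    rw [hνdef]
    nth_rewrite 1 [hP']; nth_rewrite 1 [hQ']
    rw [withDensity_add_measure,
      withDensity_add_measure, withDensity_add_measure,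
      withDensity_add_measure, withDensity_add_measure,
      withDensity_smul_measure, withDensity_smul_measure,
      withDensity_smul_measure, withDensity_smul_measure,
      withDensity_dirac' hmeas 0, withDensity_dirac' hmeas H,
      smul_smul, smul_smul, smul_smul, smul_smul, rearr, ← add_smul, ← add_smul,
      hρh h hmeas (fun x hx => by simp [hhdef, (ne_of_gt hx.1), (ne_of_lt hx.2)]),
      hcoef0, hcoefH, hP']
  have hQh : ν.withDensity h' = Q := by
    rw [hνdef]
    nth_rewrite 1 [hP']; nth_rewrite 1 [hQ']
    rw [withDensity_add_measure,
      withDensity_add_measure, withDensity_add_measure,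
      withDensity_add_measure, withDensity_add_measure,
      withDensity_smul_measure, withDensity_smul_measure,
      withDensity_smul_measure, withDensity_smul_measure,
      withDensity_dirac' hmeas' 0, withDensity_dirac' hmeas' H,
      smul_smul, smul_smul, smul_smul, smul_smul, rearr, ← add_smul, ← add_smul,
      hρh h' hmeas' (fun x hx => by simp [hh'def, (ne_of_gt hx.1), (ne_of_lt hx.2)]),
      hcoef'0, hcoef'H, hQ']
  -- finiteness of ν
  have hρuniv : ρ Set.univ < ⊤ := by
    rw [hρdef, withDensity_apply _ MeasurableSet.univ, Measure.restrict_univ,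
      lintegral_const, Measure.restrict_apply_univ, Real.volume_Ioo]
    exact ENNReal.mul_lt_top ENNReal.ofReal_lt_top ENNReal.ofReal_lt_top
  haveI : IsFiniteMeasure ν := by
    constructor
    rw [hνdef]
    nth_rewrite 1 [hP']; nth_rewrite 1 [hQ']
    simp only [Measure.add_apply, Measure.smul_apply, smul_eq_mul,
      measure_univ, mul_one]
    exact ENNReal.add_lt_top.mpr ⟨ENNReal.add_lt_top.mpr
      ⟨ENNReal.add_lt_top.mpr ⟨ENNReal.ofReal_lt_top, ENNReal.ofReal_lt_top⟩, hρuniv⟩,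
      ENNReal.add_lt_top.mpr
      ⟨ENNReal.add_lt_top.mpr ⟨ENNReal.ofReal_lt_top, ENNReal.ofReal_lt_top⟩, hρuniv⟩⟩
  haveI : SigmaFinite ν := inferInstance
  -- rnDeriv identification
  have hRP : P.rnDeriv ν =ᵐ[ν] h := hPh ▸ Measure.rnDeriv_withDensity ν hmeas
  have hRQ : Q.rnDeriv ν =ᵐ[ν] h' := hQh ▸ Measure.rnDeriv_withDensity ν hmeas'
  set A : ℝ := (Real.sqrt (q/(2*q-c)) - Real.sqrt ((q-c)/(2*q-c)))^2 with hAdef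
  set B : ℝ := (Real.sqrt ((1-q-c)/(2-2*q-c)) - Real.sqrt ((1-q)/(2-2*q-c)))^2 with hBdef
  have hae : (fun x => (Real.sqrt ((P.rnDeriv (P + Q) x).toReal)
      - Real.sqrt ((Q.rnDeriv (P + Q) x).toReal))^2)
      =ᵐ[ν] (fun x => Set.indicator {0} (fun _ => A) x
        + Set.indicator {H} (fun _ => B) x) := by
    rw [← hνdef]
    filter_upwards [hRP, hRQ] with x hx1 hx2
    rw [hx1, hx2]
    by_cases hx0 : x = 0
    · subst hx0
      rw [hh0, hh'0, ENNReal.toReal_ofReal hz0, ENNReal.toReal_ofReal hz'0]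
      simp [indicator, hH.ne', hH.ne, hAdef]
    · by_cases hxH : x = H
      · subst hxH
        rw [hhH, hh'H, ENNReal.toReal_ofReal hzH, ENNReal.toReal_ofReal hz'H]
        simp [indicator, hH.ne', hH.ne, hBdef]
      · have hhx : h x = 2⁻¹ := by simp [hhdef, hx0, hxH]
        have hh'x : h' x = 2⁻¹ := by simp [hh'def, hx0, hxH]
        rw [hhx, hh'x]
        simp [indicator, hx0, hxH]
  have hν0 : ν {0} = ENNReal.ofReal (2*q - c) := by
    rw [hνdef]
    nth_rewrite 1 [hP']; nth_rewrite 1 [hQ']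
    rw [hρdef]
    have hρ0 : (volume.restrict (Ioo 0 H)).withDensity
        (fun _ => ENNReal.ofReal (C/(H*s))) {0} = 0 := by
      rw [withDensity_apply _ (measurableSet_singleton 0), setLIntegral_const,
        Measure.restrict_apply (measurableSet_singleton 0)]
      have he : ({0} : Set ℝ) ∩ Ioo 0 H = ∅ := by
        ext y
        simp only [mem_inter_iff, mem_singleton_iff, mem_Ioo, mem_empty_iff_false,
          iff_false, not_and, and_imp]
        rintro rfl h0
        exact absurd h0 (lt_irrefl 0)
      rw [he]
      simp
    simp only [Measure.add_apply, Measure.smul_apply, smul_eq_mul, hρ0,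
      Measure.dirac_apply, mem_singleton_iff, add_zero]
    rw [show ({0}:Set ℝ).indicator (1:ℝ→ℝ≥0∞) 0 = 1 from indicator_of_mem rfl 1,
      show ({0}:Set ℝ).indicator (1:ℝ→ℝ≥0∞) H = 0 from
        indicator_of_notMem (by simp [hH.ne']) 1,
      mul_one, mul_one, mul_zero, mul_zero, add_zero, add_zero,
      ← ENNReal.ofReal_add hq0.le (by linarith : (0:ℝ) ≤ q - c)]
    ring_nf
  have hνH : ν {H} = ENNReal.ofReal (2 - 2*q - c) := by
    rw [hνdef]
    nth_rewrite 1 [hP']; nth_rewrite 1 [hQ']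
    rw [hρdef]
    have hρH : (volume.restrict (Ioo 0 H)).withDensity
        (fun _ => ENNReal.ofReal (C/(H*s))) {H} = 0 := by
      rw [withDensity_apply _ (measurableSet_singleton H), setLIntegral_const,
        Measure.restrict_apply (measurableSet_singleton H)]
      have he : ({H} : Set ℝ) ∩ Ioo 0 H = ∅ := by
        ext y
        simp only [mem_inter_iff, mem_singleton_iff, mem_Ioo, mem_empty_iff_false,
          iff_false, not_and, and_imp]
        rintro rfl h0
        exact fun h => absurd h (lt_irrefl y)
      rw [he]
      simp
    simp only [Measure.add_apply, Measure.smul_apply, smul_eq_mul, hρH,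
      Measure.dirac_apply, mem_singleton_iff, add_zero]
    rw [show ({H}:Set ℝ).indicator (1:ℝ→ℝ≥0∞) H = 1 from indicator_of_mem rfl 1,
      show ({H}:Set ℝ).indicator (1:ℝ→ℝ≥0∞) 0 = 0 from
        indicator_of_notMem (by simp [hH.ne]) 1,
      mul_one, mul_one, mul_zero, mul_zero, zero_add, zero_add,
      ← ENNReal.ofReal_add (by linarith : (0:ℝ) ≤ 1 - q - c) (by linarith : (0:ℝ) ≤ 1 - q)]
    ring_nf
  have hint : sqHellinger P Q = (1/2) * ((2*q - c) * A + (2 - 2*q - c) * B) := by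
    rw [sqHellinger, integral_congr_ae hae]
    rw [integral_add ((integrable_const A).indicator (measurableSet_singleton 0))
      ((integrable_const B).indicator (measurableSet_singleton H)),
      integral_indicator_const _ (measurableSet_singleton 0),
      integral_indicator_const _ (measurableSet_singleton H),
      measureReal_def, measureReal_def, hν0, hνH, ENNReal.toReal_ofReal ht0.le, ENNReal.toReal_ofReal ht'0.le]
    simp [smul_eq_mul]
  have hc' : q*(1-q)/(3*s) = c := by rw [hcdef, hCdef, div_div]
  have hA2 : (2*q - c) * A = (Real.sqrt q - Real.sqrt (q-c))^2 := by
    rw [hAdef, Real.sqrt_div hq0.le, Real.sqrt_div (by linarith : (0:ℝ) ≤ q - c),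
      div_sub_div_same, div_pow, Real.sq_sqrt ht0.le, mul_comm,
      div_mul_cancel₀ _ htne]
  have hB2 : (2 - 2*q - c) * B = (Real.sqrt (1-q-c) - Real.sqrt (1-q))^2 := by
    rw [hBdef, Real.sqrt_div (by linarith : (0:ℝ) ≤ 1-q-c),
      Real.sqrt_div (by linarith : (0:ℝ) ≤ 1-q),
      div_sub_div_same, div_pow, Real.sq_sqrt ht'0.le, mul_comm,
      div_mul_cancel₀ _ ht'ne]
  rw [hint, hc', hA2, hB2]
  exact key c hc0.le (le_min hcq.le hc1q.le)
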